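/- The maximal K-dimension of a proper unital subalgebra of M_n(K), for K algebraically closed and n ≥ 2, is n² − n + 1, attained by the block upper-triangular algebra B(1, n−1). -/

import Mathlib

open Module


lemma orbit_top {K V : Type*} [Field K] [AddCommGroup V] [Module K V]
    (A : Subalgebra K (Module.End K V))
    (hirr : ∀ W : Submodule K V, (∀ a ∈ A, ∀ x ∈ W, a x ∈ W) → W = ⊥ ∨ W = ⊤)
    {u : V} (hu : u ≠ 0) (v : V) : ∃ a ∈ A, a u = v := by
  set W : Submodule K V :=
    { carrier := {w | ∃ a ∈ A, a u = w}
      add_mem' := by rintro x y ⟨a, ha, rfl⟩ ⟨b, hb, rfl⟩; exact ⟨a + b, A.add_mem ha hb, rfl⟩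
      zero_mem' := ⟨0, A.zero_mem, rfl⟩
      smul_mem' := by rintro c x ⟨a, ha, rfl⟩; exact ⟨c • a, A.smul_mem ha c, rfl⟩ } with hWdef
  have hinv : ∀ a ∈ A, ∀ x ∈ W, a x ∈ W := by
    rintro b hb x ⟨a, ha, rfl⟩
    exact ⟨b * a, A.mul_mem hb ha, rfl⟩
  have huW : u ∈ W := ⟨1, A.one_mem, rfl⟩
  rcases hirr W hinv with h | h
  · exact absurd (h ▸ huW) (by simpa using hu)
  · have : v ∈ W := h ▸ Submodule.mem_top
    exact this

-- dual spanning: the set of f₀ ∘ b spans the whole dual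
lemma dual_top {K V : Type*} [Field K] [AddCommGroup V] [Module K V] [FiniteDimensional K V]
    (A : Subalgebra K (Module.End K V))
    (hirr : ∀ W : Submodule K V, (∀ a ∈ A, ∀ x ∈ W, a x ∈ W) → W = ⊥ ∨ W = ⊤)
    {f₀ : Module.Dual K V} (hf₀ : f₀ ≠ 0) (f : Module.Dual K V) :
    ∃ b ∈ A, f₀ ∘ₗ (b : Module.End K V) = f := by
  set U : Submodule K (Module.Dual K V) :=
    { carrier := {g | ∃ b ∈ A, f₀ ∘ₗ (b : Module.End K V) = g}
      add_mem' := by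
        rintro x y ⟨a, ha, rfl⟩ ⟨b, hb, rfl⟩
        exact ⟨a + b, A.add_mem ha hb, by ext z; simp⟩
      zero_mem' := ⟨0, A.zero_mem, by ext z; simp⟩
      smul_mem' := by
        rintro c x ⟨a, ha, rfl⟩
        exact ⟨c • a, A.smul_mem ha c, by ext z; simp⟩ } with hUdef
  have hf₀U : f₀ ∈ U := ⟨1, A.one_mem, by ext z; simp⟩
  set W := U.dualCoannihilator with hW
  have hWinv : ∀ a ∈ A, ∀ x ∈ W, a x ∈ W := by
    intro c hc x hx
    rw [Submodule.mem_dualCoannihilator] at hx ⊢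
    rintro φ ⟨b, hb, rfl⟩
    have := hx _ ⟨b * c, A.mul_mem hb hc, rfl⟩
    simpa using this
  have hWne : W ≠ ⊤ := by
    obtain ⟨z, hz⟩ : ∃ z, f₀ z ≠ 0 := by
      by_contra h; push_neg at h; exact hf₀ (by ext z; simp [h z])
    intro h
    have : z ∈ W := h ▸ Submodule.mem_top
    rw [Submodule.mem_dualCoannihilator] at this
    exact hz (this f₀ hf₀U)
  have hWbot : W = ⊥ := (hirr W hWinv).resolve_right hWne
  have hU : U = ⊤ := by
    apply Submodule.eq_top_of_finrank_eq
    have h1 := Subspace.finrank_add_finrank_dualCoannihilator_eq U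
    rw [← hW, hWbot, finrank_bot] at h1
    rw [Subspace.dual_finrank_eq]
    omega
  have : f ∈ U := hU ▸ Submodule.mem_top
  exact this

lemma burnside {K V : Type*} [Field K] [IsAlgClosed K] [AddCommGroup V] [Module K V]
    [FiniteDimensional K V] [Nontrivial V]
    (A : Subalgebra K (Module.End K V)) (hA : A ≠ ⊤) :
    ∃ W : Submodule K V, W ≠ ⊥ ∧ W ≠ ⊤ ∧ ∀ a ∈ A, ∀ x ∈ W, a x ∈ W := by
  by_contra hcon
  push_neg at hcon
  have hirr : ∀ W : Submodule K V, (∀ a ∈ A, ∀ x ∈ W, a x ∈ W) → W = ⊥ ∨ W = ⊤ := by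
    intro W hW
    by_contra h
    push_neg at h
    obtain ⟨a, ha, x, hx, hax⟩ := hcon W h.1 h.2
    exact hax (hW a ha x hx)
  apply hA
  -- the set of ranks of nonzero elements of A
  have hone : (1 : Module.End K V) ≠ 0 := by
    obtain ⟨v, hv⟩ := exists_ne (0 : V)
    intro h
    exact hv (by simpa using DFunLike.congr_fun h v)
  set S : Set ℕ := {r | ∃ a ∈ A, a ≠ 0 ∧ finrank K (LinearMap.range a) = r} with hS
  have hSne : S.Nonempty := ⟨_, 1, A.one_mem, hone, rfl⟩
  obtain ⟨T, hTA, hT0, hTr⟩ : ∃ a ∈ A, a ≠ 0 ∧ finrank K (LinearMap.range a) = sInf S :=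
    Nat.sInf_mem hSne
  set r := sInf S with hr
  have hmin : ∀ a ∈ A, a ≠ 0 → r ≤ finrank K (LinearMap.range a) := by
    intro a ha h0
    exact Nat.sInf_le ⟨a, ha, h0, rfl⟩
  have hr1 : 1 ≤ r := by
    rcases Nat.eq_zero_or_pos r with h | h
    · rw [h] at hTr
      exact absurd (LinearMap.range_eq_bot.mp (Submodule.finrank_eq_zero.mp hTr)) hT0
    · exact h
  -- r = 1
  have hrone : r = 1 := by
    by_contra hne
    have hr2 : 2 ≤ r := by omega
    -- find x₁ with T x₁ ≠ 0
    obtain ⟨x₁, hx₁⟩ : ∃ x, T x ≠ 0 := by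
      by_contra h; push_neg at h; exact hT0 (by ext z; simp [h z])
    set w₁ := T x₁ with hw₁
    -- find w₂ ∈ range T outside span of w₁
    have hspan : ¬ (LinearMap.range T ≤ K ∙ w₁) := by
      intro hle
      have := Submodule.finrank_mono hle
      rw [hTr, finrank_span_singleton hx₁] at this
      omega
    obtain ⟨w₂, hw₂mem, hw₂⟩ : ∃ w₂ ∈ LinearMap.range T, w₂ ∉ K ∙ w₁ := by
      by_contra h; push_neg at h; exact hspan h
    obtain ⟨x₂, hx₂⟩ := hw₂mem
    obtain ⟨a, haA, ha⟩ := orbit_top A hirr hx₁ x₂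
    have hmap : ∀ x ∈ LinearMap.range T, (T ∘ₗ (a : Module.End K V)) x ∈ LinearMap.range T :=
      fun x _ => LinearMap.mem_range_self _ _
    set g : LinearMap.range T →ₗ[K] LinearMap.range T :=
      LinearMap.restrict _ hmap with hgdef
    haveI : Nontrivial (LinearMap.range T) := Submodule.nontrivial_iff_ne_bot.mpr
      (fun h => hT0 (LinearMap.range_eq_bot.mp h))
    obtain ⟨μ, hμ⟩ := Module.End.exists_eigenvalue g
    obtain ⟨w, hw⟩ := hμ.exists_hasEigenvector
    set D : Module.End K V := T * a * T - μ • T with hDdef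
    have hDA : D ∈ A := A.sub_mem (A.mul_mem (A.mul_mem hTA haA) hTA) (A.smul_mem hTA μ)
    have hD0 : D ≠ 0 := by
      intro h
      have h1 : D x₁ = 0 := by rw [h]; rfl
      rw [hDdef] at h1
      simp only [LinearMap.sub_apply, LinearMap.smul_apply, Module.End.mul_apply] at h1
      rw [← hw₁, ha, hx₂] at h1
      apply hw₂
      rw [Submodule.mem_span_singleton]
      exact ⟨μ, by rw [eq_comm, ← sub_eq_zero]; exact h1⟩
    set h : LinearMap.range T →ₗ[K] V :=
      (LinearMap.range T).subtype ∘ₗ (g - μ • LinearMap.id) with hhdef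
    have hDle : LinearMap.range D ≤ LinearMap.range h := by
      rintro v ⟨x, rfl⟩
      refine ⟨⟨T x, LinearMap.mem_range_self _ _⟩, ?_⟩
      simp only [hhdef, hDdef, LinearMap.comp_apply, LinearMap.sub_apply,
        LinearMap.smul_apply, LinearMap.id_apply, Submodule.coe_subtype,
        AddSubgroupClass.coe_sub, SetLike.val_smul, Module.End.mul_apply, hgdef,
        LinearMap.restrict_apply]
    have hkerw : w ∈ LinearMap.ker (g - μ • LinearMap.id) := by
      rw [LinearMap.mem_ker, LinearMap.sub_apply, LinearMap.smul_apply, LinearMap.id_apply,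
        hw.apply_eq_smul, sub_self]
    have hkerpos : 1 ≤ finrank K (LinearMap.ker (g - μ • LinearMap.id)) := by
      have : LinearMap.ker (g - μ • LinearMap.id) ≠ ⊥ := by
        intro hbot
        have := hbot ▸ hkerw
        rw [Submodule.mem_bot] at this
        exact hw.2 (by simpa using congrArg Subtype.val this)
      have h0 : finrank K (LinearMap.ker (g - μ • LinearMap.id)) ≠ 0 :=
        fun hz => this (Submodule.finrank_eq_zero.mp hz)
      omega
    have hrn := LinearMap.finrank_range_add_finrank_ker (g - μ • LinearMap.id)
    have hrangeT : finrank K (LinearMap.range T) = r := hTr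
    have hranh : finrank K (LinearMap.range h) = finrank K (LinearMap.range (g - μ • LinearMap.id)) := by
      rw [hhdef, LinearMap.range_comp, Submodule.finrank_map_subtype_eq]
    have hle2 : finrank K (LinearMap.range D) ≤ r - 1 := by
      have := Submodule.finrank_mono hDle
      omega
    have := hmin D hDA hD0
    omega
  -- now r = 1 : extract rank-one operator
  rw [hrone] at hTr
  set b := Module.finBasisOfFinrankEq K (LinearMap.range T) hTr with hbdef
  set x₀ : V := (b 0 : V) with hx₀def
  have hx₀ : x₀ ≠ 0 := by
    intro h
    exact b.ne_zero 0 (Subtype.ext h)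
  set f₀ : Module.Dual K V := (b.coord 0) ∘ₗ T.rangeRestrict with hf₀def
  have hTz : ∀ z, T z = f₀ z • x₀ := by
    intro z
    have h2 := congrArg Subtype.val (b.sum_repr (T.rangeRestrict z))
    rw [Fin.sum_univ_one] at h2
    simp only [hf₀def, hx₀def, LinearMap.comp_apply, Basis.coord_apply]
    rw [show T z = ((T.rangeRestrict z : LinearMap.range T) : V) from rfl, ← h2]
    simp
  have hf₀ : f₀ ≠ 0 := by
    obtain ⟨z, hz⟩ : ∃ z, T z ≠ 0 := by
      by_contra hzz; push_neg at hzz; exact hT0 (by ext z; simp [hzz z])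
    intro h
    apply hz
    rw [hTz z, h]
    simp
  have hrank1 : ∀ (y : V) (f : Module.Dual K V),
      (LinearMap.toSpanSingleton K V y) ∘ₗ f ∈ A := by
    intro y f
    obtain ⟨a, haA, hay⟩ := orbit_top A hirr hx₀ y
    obtain ⟨c, hcA, hcf⟩ := dual_top A hirr hf₀ f
    have heq : a * T * c = (LinearMap.toSpanSingleton K V y) ∘ₗ f := by
      ext z
      simp only [Module.End.mul_apply, LinearMap.comp_apply, LinearMap.toSpanSingleton_apply]
      rw [hTz (c z), map_smul, hay, ← hcf]
      rfl
    exact heq ▸ A.mul_mem (A.mul_mem haA hTA) hcA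
  rw [eq_top_iff]
  intro S' _
  set e := Module.finBasis K V with hedef
  have hdecomp : S' = ∑ i, (LinearMap.toSpanSingleton K V (S' (e i))) ∘ₗ (e.coord i) := by
    ext z
    rw [LinearMap.sum_apply]
    simp only [LinearMap.comp_apply, LinearMap.toSpanSingleton_apply, Basis.coord_apply]
    conv_lhs => rw [← e.sum_repr z]
    rw [map_sum]
    simp [map_smul]
  rw [hdecomp]
  exact sum_mem fun i _ => hrank1 _ _

lemma matrix_dim_bound {K : Type*} [Field K] [IsAlgClosed K] {n : ℕ} (hn : 2 ≤ n)
    (A : Subalgebra K (Matrix (Fin n) (Fin n) K)) (hA : A ≠ ⊤) :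
    finrank K A ≤ n ^ 2 - n + 1 := by
  classical
  haveI : Nontrivial (Fin n → K) := by
    refine ⟨Function.const _ 0, Function.const _ 1, fun h => ?_⟩
    have := congrFun h ⟨0, by omega⟩
    simpa using this
  set e : Matrix (Fin n) (Fin n) K ≃ₐ[K] (Module.End K (Fin n → K)) :=
    Matrix.toLinAlgEquiv' with hedef
  set A' : Subalgebra K (Module.End K (Fin n → K)) := A.map e.toAlgHom with hA'def
  have hA' : A' ≠ ⊤ := by
    intro h
    apply hA
    rw [eq_top_iff]
    intro x _
    have : e x ∈ A' := h ▸ Algebra.mem_top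
    obtain ⟨y, hy, hyx⟩ := this
    have : y = x := e.injective hyx
    exact this ▸ hy
  obtain ⟨W, hWbot, hWtop, hWinv⟩ := burnside A' hA'
  set k := finrank K W with hk
  have hnV : finrank K (Fin n → K) = n := Module.finrank_fin_fun K
  have hk1 : 1 ≤ k := by
    have : finrank K W ≠ 0 := fun h => hWbot (Submodule.finrank_eq_zero.mp h)
    omega
  have hkn : k < n := by
    have := Submodule.finrank_lt hWtop
    omega
  -- the stabilizer map
  set Φ : (Module.End K (Fin n → K)) →ₗ[K] (W →ₗ[K] ((Fin n → K) ⧸ W)) :=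
    { toFun := fun S => W.mkQ ∘ₗ S ∘ₗ W.subtype
      map_add' := fun S T => by ext x; simp
      map_smul' := fun c S => by ext x; simp } with hΦdef
  have hAker : A'.toSubmodule ≤ LinearMap.ker Φ := by
    intro a ha
    rw [LinearMap.mem_ker]
    ext x
    simp only [hΦdef, LinearMap.coe_mk, AddHom.coe_mk, LinearMap.comp_apply,
      Submodule.coe_subtype, Submodule.mkQ_apply, LinearMap.zero_apply]
    rw [Submodule.Quotient.mk_eq_zero]
    exact hWinv a ha x x.2
  have hΦsurj : Function.Surjective Φ := by
    intro g
    obtain ⟨W', hcompl⟩ := Submodule.exists_isCompl W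
    set π := W.linearProjOfIsCompl W' hcompl with hπ
    obtain ⟨s, hs⟩ := Module.projective_lifting_property W.mkQ LinearMap.id
      W.mkQ_surjective
    refine ⟨s ∘ₗ g ∘ₗ π, ?_⟩
    ext x
    simp only [hΦdef, LinearMap.coe_mk, AddHom.coe_mk, LinearMap.comp_apply,
      Submodule.coe_subtype, Submodule.mkQ_apply]
    have h1 : π (x : Fin n → K) = x := Submodule.linearProjOfIsCompl_apply_left hcompl x
    rw [h1]
    have h2 := congrArg (fun f => f (g x)) hs
    simpa using h2
  have hrn := LinearMap.finrank_range_add_finrank_ker Φ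
  rw [LinearMap.range_eq_top.mpr hΦsurj, finrank_top] at hrn
  have hEnd : finrank K (Module.End K (Fin n → K)) = n * n := by
    rw [Module.finrank_linearMap, hnV]
  have hq : finrank K ((Fin n → K) ⧸ W) = n - k := by
    have := Submodule.finrank_quotient_add_finrank W
    omega
  have hHom : finrank K (W →ₗ[K] ((Fin n → K) ⧸ W)) = k * (n - k) := by
    rw [Module.finrank_linearMap, hq]
  have hrange : finrank K A' ≤ finrank K (LinearMap.ker Φ) :=
    Submodule.finrank_mono hAker
  -- finrank A = finrank A'
  have hAA' : finrank K A = finrank K A' := by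
    have hsub : A'.toSubmodule = A.toSubmodule.map (e.toLinearEquiv : _ →ₗ[K] _) := by
      ext x
      simp [hA'def, Subalgebra.mem_map]
      exact ⟨fun ⟨y, hy, hyx⟩ => by subst hyx; simpa using hy, fun h => ⟨e.symm x, h, by simp⟩⟩
    have := LinearEquiv.finrank_map_eq e.toLinearEquiv A.toSubmodule
    rw [show ((A.toSubmodule).map (e.toLinearEquiv : _ →ₗ[K] _)) = A'.toSubmodule from hsub.symm] at this
    exact this.symm
  -- arithmetic
  have hkey : n - 1 ≤ k * (n - k) := by
    clear_value k
    clear hk hq hHom hrn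
    obtain ⟨k', rfl⟩ : ∃ k', k = k' + 1 := ⟨k - 1, by omega⟩
    obtain ⟨m', hm⟩ : ∃ m', n - (k' + 1) = m' + 1 := ⟨n - k' - 2, by omega⟩
    rw [hm]
    have hexp : (k' + 1) * (m' + 1) = k' * m' + k' + m' + 1 := by ring
    omega
  have hnsq : n ^ 2 = n * n := sq n
  omega

lemma witness_subalg {K : Type*} [Field K] (n : ℕ) (hn : 2 ≤ n) :
    ∃ A : Subalgebra K (Matrix (Fin n) (Fin n) K),
        (A : Set (Matrix (Fin n) (Fin n) K))
          = {X | ∀ i : Fin n, i ≠ ⟨0, Nat.lt_of_lt_of_le Nat.two_pos hn⟩ → X i ⟨0, Nat.lt_of_lt_of_le Nat.two_pos hn⟩ = 0}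
        ∧ A ≠ ⊤ ∧ Module.finrank K A = n ^ 2 - n + 1 := by
  classical
  set z : Fin n := ⟨0, by omega⟩ with hz
  set B : Subalgebra K (Matrix (Fin n) (Fin n) K) :=
  { carrier := {X | ∀ i : Fin n, i ≠ z → X i z = 0}
    mul_mem' := by
      rintro X Y hX hY i hi
      rw [Matrix.mul_apply]
      apply Finset.sum_eq_zero
      intro j _
      by_cases hj : j = z
      · subst hj; rw [hX i hi, zero_mul]
      · rw [hY j hj, mul_zero]
    one_mem' := fun i hi => Matrix.one_apply_ne hi
    add_mem' := by
      rintro X Y hX hY i hi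
      simp [Matrix.add_apply, hX i hi, hY i hi]
    zero_mem' := fun i hi => rfl
    algebraMap_mem' := by
      intro r i hi
      rw [Algebra.algebraMap_eq_smul_one]
      simp [Matrix.smul_apply, Matrix.one_apply_ne hi] } with hB
  have hBmem : ∀ X : Matrix (Fin n) (Fin n) K, X ∈ B ↔ ∀ i : Fin n, i ≠ z → X i z = 0 :=
    fun X => Iff.rfl
  refine ⟨B, rfl, ?_, ?_⟩
  · intro h
    have h2 : Matrix.single (⟨1, by omega⟩ : Fin n) z (1 : K) ∈ B :=
      h ▸ Algebra.mem_top
    have h1 : (⟨1, by omega⟩ : Fin n) ≠ z := by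
      intro hh
      have := congrArg Fin.val hh
      simp [hz] at this
    have := (hBmem _).mp h2 _ h1
    rw [Matrix.single_apply_same] at this
    exact one_ne_zero this
  · set Ψ : Matrix (Fin n) (Fin n) K →ₗ[K] ({i : Fin n // i ≠ z} → K) :=
      { toFun := fun X i => X i.1 z
        map_add' := fun X Y => rfl
        map_smul' := fun c X => rfl } with hΨ
    have hker : Subalgebra.toSubmodule B = LinearMap.ker Ψ := by
      ext X
      rw [Subalgebra.mem_toSubmodule, hBmem, LinearMap.mem_ker]
      constructor
      · intro h
        funext i
        exact h i.1 i.2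
      · intro h i hi
        exact congrFun h ⟨i, hi⟩
    have hsurj : Function.Surjective Ψ := by
      intro v
      refine ⟨Matrix.of (fun i j => if hi : i = z then 0 else if j = z then v ⟨i, hi⟩ else 0), ?_⟩
      funext i
      show (if h : i.1 = z then 0 else if z = z then v ⟨i.1, h⟩ else 0) = v i
      rw [dif_neg i.2, if_pos rfl]
    have hrn := LinearMap.finrank_range_add_finrank_ker Ψ
    rw [LinearMap.range_eq_top.mpr hsurj, finrank_top] at hrn
    have hM : finrank K (Matrix (Fin n) (Fin n) K) = n * n := by
      rw [Module.finrank_matrix]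
      simp
    have hpi : finrank K ({i : Fin n // i ≠ z} → K) = n - 1 := by
      rw [Module.finrank_pi]
      rw [Fintype.card_subtype_compl]
      simp
    rw [← Subalgebra.finrank_toSubmodule, hker]
    have hsq : n ^ 2 = n * n := pow_two n
    have hle : n ≤ n * n := Nat.le_mul_of_pos_left n (by omega)
    rw [hM, hpi] at hrn
    refine Eq.trans (b := n * n - (n - 1)) ?_ (by omega)
    exact Nat.eq_sub_of_add_eq' hrn


/-- For `K` algebraically closed and `n ≥ 2`, the maximal dimension of a proper unital
subalgebra of `Mₙ(K)` is `n² - n + 1`, attained by the block upper-triangular algebra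
`B(1, n-1)`. -/
theorem stmt18 {K : Type*} [Field K] [IsAlgClosed K] (n : ℕ) (hn : 2 ≤ n) :
    IsGreatest {d : ℕ | ∃ A : Subalgebra K (Matrix (Fin n) (Fin n) K),
        A ≠ ⊤ ∧ Module.finrank K A = d} (n ^ 2 - n + 1)
    ∧ ∃ A : Subalgebra K (Matrix (Fin n) (Fin n) K),
        (A : Set (Matrix (Fin n) (Fin n) K))
          = {X | ∀ i : Fin n, i ≠ ⟨0, by omega⟩ → X i ⟨0, by omega⟩ = 0}
        ∧ A ≠ ⊤ ∧ Module.finrank K A = n ^ 2 - n + 1 := by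
  obtain ⟨A, hcoe, hne, hrank⟩ := witness_subalg (K := K) n hn
  refine ⟨⟨⟨A, hne, hrank⟩, ?_⟩, ⟨A, hcoe, hne, hrank⟩⟩
  rintro d ⟨B, hB, rfl⟩
  exact matrix_dim_bound hn B hB
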